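/- Let Δ be a finite abstract simplicial complex on a finite vertex set V and let κ : V → {1,…,k} be a surjective map. The following three conditions are equivalent: (i) ‖F_κ ∩ F′_κ‖ = |F ∩ F′| for every pair of facets F, F′ of Δ; (ii) for every pair of facets (F₁, F₂) of Δ there is no pair of vertices (v₁, v₂) with κ(v₁) = κ(v₂) such that v₁ ∈ F₁ \ F₂ and v₂ ∈ F₂ \ F₁; (iii) for every pair of vertices u, v with κ(u) = κ(v), either F(u) ⊆ F(v) or F(v) ⊆ F(u), i.e., for each i ∈ {1,…,k} the set {F(v) : κ(v) = i} is linearly ordered by inclusion. -/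
import Mathlib


open Finset Function

variable {V : Type} [Fintype V] [DecidableEq V]

/-- A finite abstract simplicial complex on the vertex set `V`: a collection of
finite subsets of `V` closed under taking subsets, containing every singleton. -/
def IsComplex (Δ : Finset (Finset V)) : Prop :=
  (∀ S ∈ Δ, ∀ T ⊆ S, T ∈ Δ) ∧ ∀ v : V, ({v} : Finset V) ∈ Δ

/-- `F` is a facet of `Δ`, i.e. a face maximal under inclusion. -/
def IsFacet (Δ : Finset (Finset V)) (F : Finset V) : Prop :=
  F ∈ Δ ∧ ∀ G ∈ Δ, F ⊆ G → F = G

/-- `F(v)`: the set of facets of `Δ` containing the vertex `v`. -/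
def facetsOf (Δ : Finset (Finset V)) (v : V) : Set (Finset V) :=
  {F | IsFacet Δ F ∧ v ∈ F}

/-- `S_κ(i)`: the multiplicity of the color `i` in the multiset `S_κ`. -/
def mcount {k : ℕ} (κ : V → Fin k) (S : Finset V) (i : Fin k) : ℕ :=
  (S.filter fun v => κ v = i).card

lemma sum_mcount {k : ℕ} (κ : V → Fin k) (S : Finset V) :
    ∑ i : Fin k, mcount κ S i = S.card :=
  (Finset.card_eq_sum_card_fiberwise (fun x _ => Finset.mem_univ (κ x))).symm

lemma mcount_mono {k : ℕ} (κ : V → Fin k) {S T : Finset V} (h : S ⊆ T) (i : Fin k) :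
    mcount κ S i ≤ mcount κ T i :=
  Finset.card_le_card (Finset.filter_subset_filter _ h)

lemma mcount_lt {k : ℕ} {i : Fin k} (κ : V → Fin k) {S T : Finset V} (h : S ⊆ T) {v : V}
    (hv : v ∈ T) (hvS : v ∉ S) (hi : κ v = i) : mcount κ S i < mcount κ T i := by
  apply Finset.card_lt_card
  refine ⟨Finset.filter_subset_filter _ h, fun hsub => ?_⟩
  have := hsub (Finset.mem_filter.2 ⟨hv, hi⟩)
  exact hvS (Finset.mem_filter.1 this).1

lemma exists_mem_not_mem {A B : Finset V} (h : A ⊆ B) (hc : A.card < B.card) :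
    ∃ x, x ∈ B ∧ x ∉ A := by
  by_contra hco
  push_neg at hco
  exact absurd (Finset.card_le_card hco) (by omega)

theorem stmt_0 {k : ℕ} (Δ : Finset (Finset V)) (hΔ : IsComplex Δ)
    (κ : V → Fin k) (hκ : Surjective κ) :
    ((∀ F F' : Finset V, IsFacet Δ F → IsFacet Δ F' →
        ∑ i : Fin k, min (mcount κ F i) (mcount κ F' i) = (F ∩ F').card) ↔
      (∀ F₁ F₂ : Finset V, IsFacet Δ F₁ → IsFacet Δ F₂ →
        ¬ ∃ v₁ v₂ : V, κ v₁ = κ v₂ ∧ (v₁ ∈ F₁ ∧ v₁ ∉ F₂) ∧ (v₂ ∈ F₂ ∧ v₂ ∉ F₁)))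
    ∧
    ((∀ F₁ F₂ : Finset V, IsFacet Δ F₁ → IsFacet Δ F₂ →
        ¬ ∃ v₁ v₂ : V, κ v₁ = κ v₂ ∧ (v₁ ∈ F₁ ∧ v₁ ∉ F₂) ∧ (v₂ ∈ F₂ ∧ v₂ ∉ F₁)) ↔
      (∀ u v : V, κ u = κ v →
        facetsOf Δ u ⊆ facetsOf Δ v ∨ facetsOf Δ v ⊆ facetsOf Δ u)) := by
  constructor
  · constructor
    · rintro h F₁ F₂ hF₁ hF₂ ⟨v₁, v₂, hv, ⟨h1, h2⟩, ⟨h3, h4⟩⟩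
      have heq := h F₁ F₂ hF₁ hF₂
      set i := κ v₁ with hi
      have hlt : mcount κ (F₁ ∩ F₂) i < min (mcount κ F₁ i) (mcount κ F₂ i) := by
        refine lt_min ?_ ?_
        · exact mcount_lt κ Finset.inter_subset_left h1
            (fun hm => h2 (Finset.mem_inter.1 hm).2) rfl
        · exact mcount_lt κ Finset.inter_subset_right h3
            (fun hm => h4 (Finset.mem_inter.1 hm).1) hv.symm
      have hsum : ∑ i : Fin k, mcount κ (F₁ ∩ F₂) i <
          ∑ i : Fin k, min (mcount κ F₁ i) (mcount κ F₂ i) := by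
        refine Finset.sum_lt_sum (fun j _ => le_min
          (mcount_mono κ Finset.inter_subset_left j)
          (mcount_mono κ Finset.inter_subset_right j)) ⟨i, Finset.mem_univ i, hlt⟩
      rw [sum_mcount, heq] at hsum
      exact lt_irrefl _ hsum
    · intro h F F' hF hF'
      have key : ∀ i, min (mcount κ F i) (mcount κ F' i) = mcount κ (F ∩ F') i := by
        intro i
        by_contra hne
        have ha' := mcount_mono κ (Finset.inter_subset_left (s₁ := F) (s₂ := F')) i
        have hb' := mcount_mono κ (Finset.inter_subset_right (s₁ := F) (s₂ := F')) i
        have ha : mcount κ (F ∩ F') i < mcount κ F i := by omega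
        have hb : mcount κ (F ∩ F') i < mcount κ F' i := by omega
        obtain ⟨v₁, hv₁⟩ := exists_mem_not_mem (Finset.filter_subset_filter _
          (Finset.inter_subset_left (s₁ := F) (s₂ := F'))) ha
        obtain ⟨v₂, hv₂⟩ := exists_mem_not_mem (Finset.filter_subset_filter _
          (Finset.inter_subset_right (s₁ := F) (s₂ := F'))) hb
        obtain ⟨m1, c1⟩ := Finset.mem_filter.1 hv₁.1
        have n1 := hv₁.2
        obtain ⟨m2, c2⟩ := Finset.mem_filter.1 hv₂.1
        have n2 := hv₂.2
        refine h F F' hF hF' ⟨v₁, v₂, c1.trans c2.symm, ⟨m1, fun hm => n1 ?_⟩,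
          ⟨m2, fun hm => n2 ?_⟩⟩
        · exact Finset.mem_filter.2 ⟨Finset.mem_inter.2 ⟨m1, hm⟩, c1⟩
        · exact Finset.mem_filter.2 ⟨Finset.mem_inter.2 ⟨hm, m2⟩, c2⟩
      rw [Finset.sum_congr rfl (fun i _ => key i), sum_mcount]
  · constructor
    · intro h u v huv
      by_contra hc
      push_neg at hc
      obtain ⟨hc1, hc2⟩ := hc
      obtain ⟨F₁, hF₁, hF₁'⟩ := Set.not_subset.1 hc1
      obtain ⟨F₂, hF₂, hF₂'⟩ := Set.not_subset.1 hc2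
      exact h F₁ F₂ hF₁.1 hF₂.1 ⟨u, v, huv, ⟨hF₁.2, fun hu => hF₂' ⟨hF₂.1, hu⟩⟩,
        ⟨hF₂.2, fun hv => hF₁' ⟨hF₁.1, hv⟩⟩⟩
    · rintro h F₁ F₂ hF₁ hF₂ ⟨v₁, v₂, hv, ⟨h1, h2⟩, ⟨h3, h4⟩⟩
      rcases h v₁ v₂ hv with hsub | hsub
      · exact h4 (hsub ⟨hF₁, h1⟩).2
      · exact h2 (hsub ⟨hF₂, h3⟩).2
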